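/- Let T be a locally finite tree with base vertex o, and let (x_n) be a sequence of vertices such that liminf_n d(o,x_n)/n > 0 and d(x_n, x_{n+1})/n → 0, where d is the graph metric. Then (x_n) converges to an end of T in the end compactification. -/

import Mathlib

open Filter SimpleGraph Walk

section TreeAux
variable {V : Type*} {G : SimpleGraph V}

/-- A chosen geodesic path from `o` to `v` in a connected graph. -/
noncomputable def geo (hconn : G.Connected) (o v : V) : G.Walk o v :=
  (hconn.exists_path_of_dist o v).choose

lemma geo_isPath (hconn : G.Connected) (o v : V) : (geo hconn o v).IsPath :=
  (hconn.exists_path_of_dist o v).choose_spec.1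

/-- In an acyclic connected graph, every path realizes the distance. -/
lemma path_length_eq_dist (hconn : G.Connected) (hac : G.IsAcyclic) {u v : V}
    (p : G.Walk u v) (hp : p.IsPath) : p.length = G.dist u v := by
  obtain ⟨q, hq, hql⟩ := hconn.exists_path_of_dist u v
  have h := hac.path_unique ⟨p, hp⟩ ⟨q, hq⟩
  rw [show p = q from congrArg Subtype.val h, hql]

lemma path_eq_geo (hconn : G.Connected) (hac : G.IsAcyclic) {o v : V}
    (p : G.Walk o v) (hp : p.IsPath) : p = geo hconn o v :=
  congrArg Subtype.val (hac.path_unique ⟨p, hp⟩ ⟨geo hconn o v, geo_isPath hconn o v⟩)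

lemma geo_length (hconn : G.Connected) (hac : G.IsAcyclic) (o v : V) :
    (geo hconn o v).length = G.dist o v :=
  path_length_eq_dist hconn hac _ (geo_isPath hconn o v)

lemma dist_getVert_le (hconn : G.Connected) {u v : V} (p : G.Walk u v) (i : ℕ) :
    G.dist u (p.getVert i) ≤ i := by
  induction p generalizing i with
  | nil => simp [Walk.getVert_of_length_le, SimpleGraph.dist_self]
  | @cons a b c h q ih =>
    cases i with
    | zero => simp
    | succ i =>
      rw [Walk.getVert_cons_succ]
      calc G.dist a (q.getVert i) ≤ G.dist a b + G.dist b (q.getVert i) :=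
            hconn.dist_triangle
        _ ≤ 1 + i := by
            have : G.dist a b ≤ 1 := by
              simpa using SimpleGraph.dist_le (Walk.cons h Walk.nil)
            exact Nat.add_le_add this (ih i)
        _ = i + 1 := by omega

lemma dist_getVert_right_le {u v : V} (p : G.Walk u v) (i : ℕ) :
    G.dist (p.getVert i) v ≤ p.length - i := by
  induction p generalizing i with
  | nil => simp [Walk.getVert_of_length_le, SimpleGraph.dist_self]
  | @cons a b c h q ih =>
    cases i with
    | zero =>
      simpa using SimpleGraph.dist_le (Walk.cons h q)
    | succ i =>
      rw [Walk.getVert_cons_succ]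
      simpa using ih i

/-- Vertices on a geodesic path split the distance. -/
lemma geodesic_split (hconn : G.Connected) (hac : G.IsAcyclic) {u v : V}
    (p : G.Walk u v) (hp : p.IsPath) {i : ℕ} (hi : i ≤ p.length) :
    G.dist u (p.getVert i) = i ∧ G.dist (p.getVert i) v = p.length - i := by
  have h1 := dist_getVert_le hconn p i
  have h2 := dist_getVert_right_le p i
  have h3 : p.length ≤ G.dist u (p.getVert i) + G.dist (p.getVert i) v := by
    rw [path_length_eq_dist hconn hac p hp]
    exact hconn.dist_triangle
  omega

/-- In a tree, the geodesics from `o` to two adjacent vertices agree below both levels. -/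
lemma geo_getVert_step (hconn : G.Connected) (hac : G.IsAcyclic) (o : V) {a b : V}
    (hadj : G.Adj a b) {k : ℕ} (hka : k ≤ G.dist o a) (hkb : k ≤ G.dist o b) :
    (geo hconn o a).getVert k = (geo hconn o b).getVert k := by
  classical
  set p := geo hconn o a with hpdef
  have hpp : p.IsPath := geo_isPath hconn o a
  by_cases hb : b ∈ p.support
  · have hq : (p.takeUntil b hb).IsPath := hpp.takeUntil hb
    have hqe : p.takeUntil b hb = geo hconn o b := path_eq_geo hconn hac _ hq
    have hlen : (p.takeUntil b hb).length = G.dist o b := by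
      rw [hqe]; exact geo_length hconn hac o b
    have hmain : p.getVert k = (p.takeUntil b hb).getVert k := by
      conv_lhs => rw [← p.take_spec hb]
      rw [Walk.getVert_append]
      rcases lt_or_eq_of_le (hkb.trans_eq hlen.symm) with h | h
      · rw [if_pos h]
      · rw [if_neg (by omega), h, Nat.sub_self, Walk.getVert_zero, Walk.getVert_length]
    rw [hmain, hqe]
  · have hq : (p.concat hadj).IsPath := by
      rw [Walk.concat_eq_append, Walk.isPath_def, Walk.support_append]
      simp only [Walk.support_cons, Walk.support_nil, List.tail_cons]
      rw [List.nodup_append]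
      refine ⟨hpp.support_nodup, List.nodup_singleton _, ?_⟩
      intro z hz y hy hzy
      simp only [List.mem_singleton] at hy
      subst hy; subst hzy
      exact hb hz
    have hqe : p.concat hadj = geo hconn o b := path_eq_geo hconn hac _ hq
    have hplen : p.length = G.dist o a := geo_length hconn hac o a
    have hmain : (p.concat hadj).getVert k = p.getVert k := by
      rw [Walk.concat_eq_append, Walk.getVert_append]
      rcases lt_or_eq_of_le (hka.trans_eq hplen.symm) with h | h
      · rw [if_pos h]
      · rw [if_neg (by omega), h, Nat.sub_self, Walk.getVert_zero]
        exact (Walk.getVert_length p).symm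
    rw [← hqe, hmain]

/-- Agreement of geodesics propagates along walks staying above level `k`. -/
lemma geo_getVert_chain (hconn : G.Connected) (hac : G.IsAcyclic) (o : V) {a b : V}
    (w : G.Walk a b) (k : ℕ) (h : ∀ i ≤ w.length, k ≤ G.dist o (w.getVert i)) :
    (geo hconn o a).getVert k = (geo hconn o b).getVert k := by
  induction w with
  | nil => rfl
  | @cons a c b hadj q ih =>
    have h0 := h 0 (by simp)
    have h1 := h 1 (by simp [Walk.length_cons])
    rw [Walk.getVert_zero] at h0
    rw [show (Walk.cons hadj q).getVert 1 = c by
      rw [Walk.getVert_cons_succ, Walk.getVert_zero]] at h1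
    rw [geo_getVert_step hconn hac o hadj h0 h1]
    exact ih fun i hi => by
      simpa [Walk.getVert_cons_succ] using h (i + 1) (by simp [Walk.length_cons]; omega)

/-- If the Gromov product of `a` and `b` at `o` is at least `k`, the geodesics
from `o` to `a` and `b` agree at level `k`. -/
lemma geo_agree (hconn : G.Connected) (hac : G.IsAcyclic) (o a b : V) (k : ℕ)
    (hka : k ≤ G.dist o a) (hkb : k ≤ G.dist o b)
    (hab : G.dist a b + 2 * k ≤ G.dist o a + G.dist o b) :
    (geo hconn o a).getVert k = (geo hconn o b).getVert k := by
  obtain ⟨w, hw⟩ := hconn.exists_walk_length_eq_dist a b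
  apply geo_getVert_chain hconn hac o w k
  intro i hi
  have h1 : G.dist a (w.getVert i) ≤ i := dist_getVert_le hconn w i
  have h2 : G.dist (w.getVert i) b ≤ w.length - i := dist_getVert_right_le w i
  have h3 : G.dist o a ≤ G.dist o (w.getVert i) + G.dist (w.getVert i) a :=
    hconn.dist_triangle
  have h4 : G.dist o b ≤ G.dist o (w.getVert i) + G.dist (w.getVert i) b :=
    hconn.dist_triangle
  rw [SimpleGraph.dist_comm] at h1
  omega

end TreeAux

/-- Every regular sequence in a locally finite tree converges to an end: if
`liminf d(o,xₙ)/n > 0` and `d(xₙ,xₙ₊₁)/n → 0`, then there is an infinite reduced path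
(ray) `ξ` starting at `o` such that for every `m` the geodesic from `o` to `xₙ`
eventually passes through `ξ m`; i.e. `(xₙ)` converges to the end determined by `ξ`
in the end compactification. -/
theorem regular_sequence_converges_to_end {V : Type*} (G : SimpleGraph V)
    (hconn : G.Connected) (hacyclic : G.IsAcyclic)
    (hlocfin : ∀ v : V, (G.neighborSet v).Finite)
    (o : V) (x : ℕ → V)
    (h1 : 0 < atTop.liminf (fun n => (G.dist o (x n) : ℝ) / n))
    (h2 : Tendsto (fun n => (G.dist (x n) (x (n + 1)) : ℝ) / n) atTop (nhds 0)) :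
    ∃ ξ : ℕ → V, ξ 0 = o ∧ (∀ m, G.Adj (ξ m) (ξ (m + 1))) ∧ (∀ m, ξ (m + 2) ≠ ξ m) ∧
      ∀ m, ∀ᶠ n in atTop, G.dist o (x n) = G.dist o (ξ m) + G.dist (ξ m) (x n) := by
  set L : ℝ := atTop.liminf (fun n => (G.dist o (x n) : ℝ) / n) with hLdef
  have hbdd : IsBoundedUnder (· ≥ ·) atTop (fun n => (G.dist o (x n) : ℝ) / n) :=
    ⟨(0 : ℝ), Filter.eventually_map.2 (Filter.Eventually.of_forall fun n =>
      div_nonneg (Nat.cast_nonneg _) (Nat.cast_nonneg _))⟩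
  have hc : ∀ᶠ n in atTop, L / 2 < (G.dist o (x n) : ℝ) / n :=
    eventually_lt_of_lt_liminf (by linarith) hbdd
  have hd : ∀ᶠ n in atTop, (G.dist (x n) (x (n + 1)) : ℝ) / n < L / 4 :=
    h2.eventually_lt_const (by linarith)
  -- the stability claim
  have key : ∀ m : ℕ, ∀ᶠ n in atTop, m ≤ G.dist o (x n) ∧
      (geo hconn o (x n)).getVert m = (geo hconn o (x (n + 1))).getVert m := by
    intro m
    have hc2 : ∀ᶠ n in atTop, L / 2 < (G.dist o (x (n + 1)) : ℝ) / ((n + 1 : ℕ) : ℝ) :=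
      (tendsto_add_atTop_nat 1).eventually hc
    have hm4 : ∀ᶠ n : ℕ in atTop, (m : ℝ) + 1 ≤ L / 4 * n := by
      have ht : Tendsto (fun n : ℕ => L / 4 * (n : ℝ)) atTop atTop :=
        (tendsto_natCast_atTop_atTop).const_mul_atTop (by linarith)
      exact ht.eventually_ge_atTop _
    filter_upwards [hc, hc2, hd, hm4, eventually_ge_atTop 1] with n hA hB hC hD hn
    have hn0 : (0 : ℝ) < n := by exact_mod_cast hn
    have hn1 : (0 : ℝ) < (n : ℝ) + 1 := by linarith
    have hA' : L / 2 * n < (G.dist o (x n) : ℝ) := by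
      rw [lt_div_iff₀ hn0] at hA; linarith [hA]
    have hB' : L / 2 * ((n : ℝ) + 1) < (G.dist o (x (n + 1)) : ℝ) := by
      push_cast at hB
      rw [lt_div_iff₀ hn1] at hB; linarith [hB]
    have hC' : (G.dist (x n) (x (n + 1)) : ℝ) < L / 4 * n := by
      rw [div_lt_iff₀ hn0] at hC; linarith [hC]
    have hmn : (m : ℝ) + 1 ≤ (G.dist o (x n) : ℝ) := by nlinarith
    have hmn1 : (m : ℝ) + 1 ≤ (G.dist o (x (n + 1)) : ℝ) := by nlinarith
    have hm_le : m ≤ G.dist o (x n) := by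
      have h : (m : ℝ) ≤ (G.dist o (x n) : ℝ) := by linarith
      exact_mod_cast h
    have hm_le1 : m ≤ G.dist o (x (n + 1)) := by
      have h : (m : ℝ) ≤ (G.dist o (x (n + 1)) : ℝ) := by linarith
      exact_mod_cast h
    refine ⟨hm_le, ?_⟩
    apply geo_agree hconn hacyclic o (x n) (x (n + 1)) m hm_le hm_le1
    have hreal : (G.dist (x n) (x (n + 1)) : ℝ) + 2 * m ≤
        (G.dist o (x n) : ℝ) + (G.dist o (x (n + 1)) : ℝ) := by nlinarith
    exact_mod_cast hreal
  -- extract the limit vertex at each level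
  have key2 : ∀ m : ℕ, ∃ v : V, ∀ᶠ n in atTop,
      m ≤ G.dist o (x n) ∧ (geo hconn o (x n)).getVert m = v := by
    intro m
    obtain ⟨N, hN⟩ := eventually_atTop.1 (key m)
    refine ⟨(geo hconn o (x N)).getVert m, eventually_atTop.2 ⟨N, fun n hn => ?_⟩⟩
    refine ⟨(hN n hn).1, ?_⟩
    induction n, hn using Nat.le_induction with
    | base => rfl
    | succ n hn ih => rw [← (hN n hn).2]; exact ih
  choose ξ hξ using key2
  refine ⟨ξ, ?_, ?_, ?_, ?_⟩
  · obtain ⟨n, _, h0⟩ := (hξ 0).exists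
    rw [← h0, Walk.getVert_zero]
  · intro m
    obtain ⟨n, ⟨hm1, hm2⟩, hm3, hm4⟩ := ((hξ m).and (hξ (m + 1))).exists
    rw [← hm2, ← hm4]
    apply Walk.adj_getVert_succ
    rw [geo_length hconn hacyclic]
    omega
  · intro m
    obtain ⟨n, ⟨hm1, hm2⟩, hm3, hm4⟩ := ((hξ m).and (hξ (m + 2))).exists
    intro hcon
    have hlen : (geo hconn o (x n)).length = G.dist o (x n) := geo_length hconn hacyclic o (x n)
    have e1 := (geodesic_split hconn hacyclic _ (geo_isPath hconn o (x n))
      (i := m) (by omega)).1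
    have e2 := (geodesic_split hconn hacyclic _ (geo_isPath hconn o (x n))
      (i := m + 2) (by omega)).1
    rw [hm2] at e1
    rw [hm4, hcon] at e2
    omega
  · intro m
    filter_upwards [hξ m] with n hn
    obtain ⟨hm1, hm2⟩ := hn
    have hlen : (geo hconn o (x n)).length = G.dist o (x n) := geo_length hconn hacyclic o (x n)
    obtain ⟨e1, e2⟩ := geodesic_split hconn hacyclic _ (geo_isPath hconn o (x n))
      (i := m) (by omega)
    rw [hm2] at e1 e2
    omega
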